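/- Composition of first layers commutes with transformations: let H(x) = aAx + c with a ≠ 0, A ∈ O(D), c ∈ R^D. If two one-hidden-layer sampled feature maps Φ^{(1)} on X and Φ̂^{(1)} on H(X), each with N₁ neurons and the same activation φ, are built from point pairs related by x̂_i^{(j)} = H(x_i^{(j)}) for j = 1,2 and all i (with weights s₁(x^{(2)}−x^{(1)})/‖x^{(2)}−x^{(1)}‖² and biases ⟨w, x^{(1)}⟩ + s₂), then Φ^{(1)}(x) = Φ̂^{(1)}(H(x)) for all x ∈ X. -/

import Mathlib

theorem first_layer_commutes_with_transformation {D N₁ : ℕ}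
    (X : Set (EuclideanSpace ℝ (Fin D)))
    (a : ℝ) (ha : a ≠ 0) (A : EuclideanSpace ℝ (Fin D) ≃ₗᵢ[ℝ] EuclideanSpace ℝ (Fin D))
    (c : EuclideanSpace ℝ (Fin D))
    (H : EuclideanSpace ℝ (Fin D) → EuclideanSpace ℝ (Fin D)) (hH : ∀ x, H x = a • A x + c)
    (s₁ s₂ : ℝ) (φ : ℝ → ℝ)
    (x1 x2 : Fin N₁ → EuclideanSpace ℝ (Fin D)) (hx : ∀ i, x1 i ≠ x2 i)
    (xh1 xh2 : Fin N₁ → EuclideanSpace ℝ (Fin D))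
    (hxh1 : ∀ i, xh1 i = H (x1 i)) (hxh2 : ∀ i, xh2 i = H (x2 i))
    (w : Fin N₁ → EuclideanSpace ℝ (Fin D))
    (hw : ∀ i, w i = (s₁ / ‖x2 i - x1 i‖ ^ 2) • (x2 i - x1 i))
    (b : Fin N₁ → ℝ) (hb : ∀ i, b i = (inner ℝ (w i) (x1 i) : ℝ) + s₂)
    (wh : Fin N₁ → EuclideanSpace ℝ (Fin D))
    (hwh : ∀ i, wh i = (s₁ / ‖xh2 i - xh1 i‖ ^ 2) • (xh2 i - xh1 i))
    (bh : Fin N₁ → ℝ) (hbh : ∀ i, bh i = (inner ℝ (wh i) (xh1 i) : ℝ) + s₂)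
    (Φ Φh : EuclideanSpace ℝ (Fin D) → Fin N₁ → ℝ)
    (hΦ : ∀ x i, Φ x i = φ ((inner ℝ (w i) x : ℝ) - b i))
    (hΦh : ∀ x i, Φh x i = φ ((inner ℝ (wh i) x : ℝ) - bh i)) :
    ∀ x ∈ X, Φ x = Φh (H x) := by
  intro x _
  funext i
  rw [hΦ, hΦh, hb, hbh]
  have key : (inner ℝ (w i) x : ℝ) - inner ℝ (w i) (x1 i)
      = (inner ℝ (wh i) (H x) : ℝ) - inner ℝ (wh i) (xh1 i) := by
    rw [← inner_sub_right, ← inner_sub_right]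
    set d := x2 i - x1 i with hd
    have hdne : d ≠ 0 := sub_ne_zero.mpr (hx i).symm
    have h1 : xh2 i - xh1 i = a • A d := by
      rw [hxh1, hxh2, hH, hH, hd, map_sub, smul_sub]
      abel
    have h2 : H x - xh1 i = a • A (x - x1 i) := by
      rw [hxh1, hH, hH, map_sub, smul_sub]
      abel
    rw [hw, hwh, h1, h2, inner_smul_left, inner_smul_left, inner_smul_left,
      inner_smul_right, A.inner_map_map, norm_smul, A.norm_map]
    have hdn : ‖d‖ ≠ 0 := norm_ne_zero_iff.mpr hdne
    simp only [conj_trivial]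
    set r : ℝ := inner ℝ d (x - x1 i)
    rw [mul_pow, Real.norm_eq_abs, sq_abs, ← hd]
    have ha2 : a ^ 2 ≠ 0 := pow_ne_zero 2 ha
    field_simp
  rw [sub_add_eq_sub_sub, sub_add_eq_sub_sub, key]
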